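/- Colorful Carathéodory theorem: let C₁, C₂, …, C_{d+1} be subsets of ℝ^d and let p ∈ ℝ^d. If p lies in the convex hull of every C_i (i = 1, …, d+1), then there exist points x₁ ∈ C₁, x₂ ∈ C₂, …, x_{d+1} ∈ C_{d+1} such that p lies in the convex hull of {x₁, x₂, …, x_{d+1}}. -/

import Mathlib

open Finset Metric

local notation "⟪" x ", " y "⟫" => @inner ℝ _ _ x y

private lemma colorful_aux (d : ℕ) (F : Fin (d + 1) → Finset (EuclideanSpace ℝ (Fin d)))
    (p : EuclideanSpace ℝ (Fin d))
    (hp : ∀ i, p ∈ convexHull ℝ (F i : Set (EuclideanSpace ℝ (Fin d)))) :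
    ∃ x : Fin (d + 1) → EuclideanSpace ℝ (Fin d), (∀ i, x i ∈ F i) ∧
      p ∈ convexHull ℝ (Set.range x) := by
  classical
  have hne : ∀ i, (F i).Nonempty := fun i =>
    Finset.coe_nonempty.1 (convexHull_nonempty_iff.1 ⟨p, hp i⟩)
  set T : Finset (Fin (d + 1) → EuclideanSpace ℝ (Fin d)) := Fintype.piFinset F with hT
  have hTne : T.Nonempty :=
    ⟨fun i => (hne i).choose, Fintype.mem_piFinset.2 fun i => (hne i).choose_spec⟩
  obtain ⟨x, hxT, hmin⟩ :=
    T.exists_min_image (fun y => infDist p (convexHull ℝ (Set.range y))) hTne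
  have hxF : ∀ i, x i ∈ F i := Fintype.mem_piFinset.1 hxT
  refine ⟨x, hxF, ?_⟩
  set K := convexHull ℝ (Set.range x) with hKdef
  have hKconv : Convex ℝ K := convex_convexHull ℝ _
  have hKclosed : IsClosed K := (Set.finite_range x).isClosed_convexHull ℝ
  have hKne : K.Nonempty := ⟨x 0, subset_convexHull ℝ _ ⟨0, rfl⟩⟩
  by_contra hpK
  obtain ⟨q, hqK, hq_dist⟩ := hKclosed.exists_infDist_eq_dist hKne p
  have hpq : p ≠ q := fun h => hpK (h ▸ hqK)
  have hiInf : ‖p - q‖ = ⨅ w : K, ‖p - w‖ := by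
    have : Nonempty K := ⟨⟨q, hqK⟩⟩
    rw [← dist_eq_norm, ← hq_dist, infDist_eq_iInf]
    simp [dist_eq_norm]
  have hnear : ∀ w ∈ K, ⟪p - q, w - q⟫ ≤ 0 :=
    (norm_eq_iInf_iff_real_inner_le_zero hKconv hqK).1 hiInf
  have hpqne : p - q ≠ 0 := sub_ne_zero.2 hpq
  have hpq0 : (0 : ℝ) < ⟪p - q, p - q⟫ := by
    rw [real_inner_self_eq_norm_sq]
    exact pow_pos (norm_pos_iff.2 hpqne) 2
  -- we can drop one color
  have hdrop : ∃ j, q ∈ convexHull ℝ (x '' {i | i ≠ j}) := by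
    by_cases hinj : Function.Injective x
    · set s : Finset (EuclideanSpace ℝ (Fin d)) := Finset.image x Finset.univ with hs
      have hsr : (s : Set (EuclideanSpace ℝ (Fin d))) = Set.range x := by simp [hs]
      have hqs : q ∈ convexHull ℝ (s : Set (EuclideanSpace ℝ (Fin d))) := by rw [hsr]; exact hqK
      obtain ⟨w, hw0, hw1, hw2⟩ := Finset.mem_convexHull'.1 hqs
      set S : Finset (EuclideanSpace ℝ (Fin d)) := s.filter (fun y => w y ≠ 0) with hS
      have hsum0 : ∑ y ∈ s, w y * ⟪p - q, y - q⟫ = 0 := by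
        have h1 : ∀ y, w y * ⟪p - q, y - q⟫ = w y * ⟪p - q, y⟫ - w y * ⟪p - q, q⟫ := by
          intro y; rw [inner_sub_right]; ring
        simp_rw [h1]
        rw [Finset.sum_sub_distrib, ← Finset.sum_mul, hw1, one_mul]
        have h2 : ∑ y ∈ s, w y * ⟪p - q, y⟫ = ⟪p - q, ∑ y ∈ s, w y • y⟫ := by
          rw [inner_sum]
          simp_rw [real_inner_smul_right]
        rw [h2, hw2, sub_self]
      have hterm : ∀ y ∈ s, w y * ⟪p - q, y - q⟫ ≤ 0 := by
        intro y hy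
        have hyK : y ∈ K := subset_convexHull ℝ _ (hsr ▸ Finset.mem_coe.2 hy)
        exact mul_nonpos_iff.2 (Or.inl ⟨hw0 y hy, hnear y hyK⟩)
      have hzero : ∀ y ∈ S, ⟪p - q, y - q⟫ = 0 := by
        intro y hy
        rw [hS, Finset.mem_filter] at hy
        have h0 := (Finset.sum_eq_zero_iff_of_nonpos hterm).1 hsum0 y hy.1
        exact (mul_eq_zero.1 h0).resolve_left hy.2
      have hqS : q ∈ convexHull ℝ (S : Set (EuclideanSpace ℝ (Fin d))) := by
        apply Finset.mem_convexHull'.2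
        refine ⟨w, fun y hy => hw0 y (Finset.mem_filter.1 hy).1, ?_, ?_⟩
        · rw [hS, Finset.sum_filter_ne_zero, hw1]
        · rw [hS, Finset.sum_filter_of_ne, hw2]
          intro y _ h hw
          exact h (by rw [hw, zero_smul])
      rw [convexHull_eq_union] at hqS
      simp only [Set.mem_iUnion] at hqS
      obtain ⟨t, htS, hai, hqt⟩ := hqS
      -- the affinely independent set t has at most d elements
      have hcard : t.card ≤ d := by
        rcases t.eq_empty_or_nonempty with h | h
        · simp [h]
        · have hnet : Nonempty ↥t := ⟨⟨h.choose, h.choose_spec⟩⟩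
          set f : EuclideanSpace ℝ (Fin d) →ₗ[ℝ] ℝ := (innerSL ℝ (p - q)).toLinearMap with hf
          have hvs : vectorSpan ℝ (Set.range ((↑) : ↥t → EuclideanSpace ℝ (Fin d))) ≤
              LinearMap.ker f := by
            rw [Subtype.range_coe, vectorSpan_def]
            apply Submodule.span_le.2
            rintro v hv
            rw [Set.mem_vsub] at hv
            obtain ⟨a, ha, b, hb, rfl⟩ := hv
            have ha0 : ⟪p - q, a - q⟫ = 0 := hzero a (htS ha)
            have hb0 : ⟪p - q, b - q⟫ = 0 := hzero b (htS hb)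
            simp only [SetLike.mem_coe, LinearMap.mem_ker, vsub_eq_sub]
            show ⟪p - q, a - b⟫ = 0
            have hab : a - b = (a - q) - (b - q) := by abel
            rw [hab, inner_sub_right, ha0, hb0, sub_zero]
          have hker : LinearMap.ker f < ⊤ := by
            rw [lt_top_iff_ne_top]
            intro htop
            have hmemtop : p - q ∈ LinearMap.ker f := by rw [htop]; trivial
            have h0 : ⟪p - q, p - q⟫ = (0 : ℝ) := LinearMap.mem_ker.1 hmemtop
            linarith
          have hkerlt : Module.finrank ℝ (LinearMap.ker f) < d := by
            have := Submodule.finrank_lt (K := ℝ) (V := EuclideanSpace ℝ (Fin d)) hker.ne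
            rwa [finrank_euclideanSpace_fin] at this
          have hcard1 := hai.finrank_vectorSpan_add_one
          rw [Fintype.card_coe] at hcard1
          have hmono := Submodule.finrank_mono hvs
          omega
      -- pick a color not used by t
      have hj : ∃ j, x j ∉ t := by
        by_contra h
        push_neg at h
        have hsub : s ⊆ t := by
          intro a ha
          rw [hs, Finset.mem_image] at ha
          obtain ⟨i, _, rfl⟩ := ha
          exact h i
        have := Finset.card_le_card hsub
        rw [hs, Finset.card_image_of_injective _ hinj, Finset.card_univ, Fintype.card_fin] at this
        omega
      obtain ⟨j, hjt⟩ := hj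
      refine ⟨j, convexHull_mono ?_ hqt⟩
      intro a ha
      have haS : a ∈ S := htS ha
      have : a ∈ Set.range x := by
        rw [← hsr]
        exact Finset.mem_coe.2 (Finset.mem_filter.1 haS).1
      obtain ⟨k, rfl⟩ := this
      refine ⟨k, ?_, rfl⟩
      intro hkj
      exact hjt (hkj ▸ ha)
    · obtain ⟨i, i', hii', hne'⟩ : ∃ i i', x i = x i' ∧ i ≠ i' := by
        simp only [Function.Injective, not_forall] at hinj
        obtain ⟨i, i', h1, h2⟩ := hinj
        exact ⟨i, i', h1, h2⟩
      refine ⟨i', convexHull_mono ?_ hqK⟩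
      rintro _ ⟨k, rfl⟩
      by_cases hk : k = i'
      · exact ⟨i, hne', by rw [hii', hk]⟩
      · exact ⟨k, hk, rfl⟩
  obtain ⟨j, hqj⟩ := hdrop
  -- pick a good replacement point in color j
  have hy : ∃ y ∈ F j, 0 < ⟪p - q, y - q⟫ := by
    by_contra h
    push_neg at h
    have hhalf : Convex ℝ {z : EuclideanSpace ℝ (Fin d) | ⟪p - q, z⟫ ≤ ⟪p - q, q⟫} :=
      convex_halfSpace_le ⟨fun a b => inner_add_right _ _ _,
        fun c a => real_inner_smul_right _ _ _⟩ _
    have hsub : (F j : Set (EuclideanSpace ℝ (Fin d))) ⊆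
        {z | ⟪p - q, z⟫ ≤ ⟪p - q, q⟫} := by
      intro y hy
      have h1 := h y hy
      rw [inner_sub_right] at h1
      simp only [Set.mem_setOf_eq]
      linarith
    have hmem := convexHull_min hsub hhalf (hp j)
    rw [Set.mem_setOf_eq] at hmem
    rw [inner_sub_right] at hpq0
    linarith
  obtain ⟨y, hyF, hy0⟩ := hy
  have hyq : y - q ≠ 0 := by
    intro h
    rw [h, inner_zero_right] at hy0
    exact lt_irrefl _ hy0
  set x' := Function.update x j y with hx'
  have hx'T : x' ∈ T := by
    apply Fintype.mem_piFinset.2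
    intro i
    by_cases hij : i = j
    · subst hij; simp [hx', hyF]
    · simp [hx', Function.update_of_ne hij, hxF i]
  have hq' : q ∈ convexHull ℝ (Set.range x') := by
    refine convexHull_mono ?_ hqj
    rintro _ ⟨k, hk, rfl⟩
    exact ⟨k, by simp [hx', Function.update_of_ne hk]⟩
  have hy' : y ∈ convexHull ℝ (Set.range x') :=
    subset_convexHull ℝ _ ⟨j, by simp [hx']⟩
  set c : ℝ := ⟪p - q, y - q⟫ with hc
  have hnq : (0 : ℝ) < ‖y - q‖ ^ 2 := pow_pos (norm_pos_iff.2 hyq) 2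
  set θ : ℝ := min 1 (c / ‖y - q‖ ^ 2) with hθ
  have hθ0 : 0 < θ := lt_min one_pos (div_pos hy0 hnq)
  have hθ1 : θ ≤ 1 := min_le_left _ _
  have hθc : θ * ‖y - q‖ ^ 2 ≤ c := by
    have := min_le_right 1 (c / ‖y - q‖ ^ 2)
    calc θ * ‖y - q‖ ^ 2 ≤ (c / ‖y - q‖ ^ 2) * ‖y - q‖ ^ 2 := by
          apply mul_le_mul_of_nonneg_right _ (le_of_lt hnq)
          exact this
      _ = c := by field_simp
  set z := (1 - θ) • q + θ • y with hz
  have hzK : z ∈ convexHull ℝ (Set.range x') := by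
    have := (convex_convexHull ℝ (Set.range x')) hq' hy'
      (by linarith : (0:ℝ) ≤ 1 - θ) (le_of_lt hθ0) (by ring)
    exact this
  have hlt : dist p z < dist p q := by
    rw [dist_eq_norm, dist_eq_norm]
    have hpz : p - z = (p - q) - θ • (y - q) := by
      rw [hz]
      rw [smul_sub, sub_smul, one_smul]
      abel
    have hexp : ‖(p - q) - θ • (y - q)‖ ^ 2
        = ‖p - q‖ ^ 2 - 2 * θ * ⟪p - q, y - q⟫ + θ ^ 2 * ‖y - q‖ ^ 2 := by
      rw [@norm_sub_sq_real, real_inner_smul_right, norm_smul, Real.norm_eq_abs,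
        abs_of_pos hθ0]
      ring
    have hsq : ‖p - z‖ ^ 2 < ‖p - q‖ ^ 2 := by
      rw [hpz, hexp]
      nlinarith [hθ0, hθc, hy0]
    have h1 : 0 ≤ ‖p - z‖ := norm_nonneg _
    have h2 : 0 ≤ ‖p - q‖ := norm_nonneg _
    nlinarith
  have h1 : infDist p (convexHull ℝ (Set.range x')) ≤ dist p z := infDist_le_dist_of_mem hzK
  have h2 := hmin x' hx'T
  rw [hq_dist] at h2
  linarith

/-- Colorful Carathéodory theorem: if a point `p` lies in the convex hull of each of
`d+1` sets `C 0, …, C d` in `ℝ^d`, then one can pick one point from each set so that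
`p` lies in the convex hull of the chosen points. -/
theorem colorful_caratheodory (d : ℕ) (C : Fin (d + 1) → Set (Fin d → ℝ))
    (p : Fin d → ℝ) (hp : ∀ i, p ∈ convexHull ℝ (C i)) :
    ∃ x : Fin (d + 1) → Fin d → ℝ, (∀ i, x i ∈ C i) ∧
      p ∈ convexHull ℝ (Set.range x) := by
  classical
  let e : (Fin d → ℝ) ≃ₗ[ℝ] EuclideanSpace ℝ (Fin d) := (WithLp.linearEquiv 2 ℝ (Fin d → ℝ)).symm
  let C' : Fin (d + 1) → Set (EuclideanSpace ℝ (Fin d)) := fun i => e '' C i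
  let p' : EuclideanSpace ℝ (Fin d) := e p
  have hp' : ∀ i, p' ∈ convexHull ℝ (C' i) := fun i => by
    have h := e.toLinearMap.image_convexHull (C i)
    exact h ▸ ⟨p, hp i, rfl⟩
  have h1 : ∀ i, ∃ t : Finset (EuclideanSpace ℝ (Fin d)),
      ↑t ⊆ C' i ∧ p' ∈ convexHull ℝ (t : Set (EuclideanSpace ℝ (Fin d))) := by
    intro i
    have hpi := hp' i
    rw [convexHull_eq_union] at hpi
    simp only [Set.mem_iUnion] at hpi
    obtain ⟨t, h1, _, h3⟩ := hpi
    exact ⟨t, h1, h3⟩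
  choose F hF1 hF2 using h1
  obtain ⟨x, hx1, hx2⟩ := colorful_aux d F p' hF2
  refine ⟨fun i => e.symm (x i), fun i => ?_, ?_⟩
  · obtain ⟨c, hc, hce⟩ := hF1 i (hx1 i)
    show e.symm (x i) ∈ C i
    rw [← hce, LinearEquiv.symm_apply_apply]; exact hc
  · have : Set.range (fun i => e.symm (x i)) = e.symm.toLinearMap '' Set.range x := by
      rw [← Set.range_comp]; rfl
    rw [this, ← LinearMap.image_convexHull]
    exact ⟨p', hx2, e.symm_apply_apply p⟩
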